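/- For m ≥ 2 a natural number and real x, y, t with |x t| + |y| |t|^m < 1, the lacunary Chebyshev (Humbert) polynomials U_n^(m)(x,y) := (-1)^n Σ_{r=0}^{⌊n/m⌋} (-1)^((m-1)r) (n-(m-1)r)! x^(n-mr) y^r / ((n-mr)! r!) satisfy Σ_{n=0}^∞ t^n U_n^(m)(x,y) = 1/(1 + x t + y t^m). -/

import Mathlib

open Real Finset

noncomputable def humbert (m n : ℕ) (x y : ℝ) : ℝ :=
  (-1 : ℝ) ^ n *
    ∑ r ∈ Finset.range (n / m + 1),
      (-1 : ℝ) ^ ((m - 1) * r) * (Nat.factorial (n - (m - 1) * r) : ℝ) *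
        x ^ (n - m * r) * y ^ r /
        ((Nat.factorial (n - m * r) : ℝ) * (Nat.factorial r : ℝ))

theorem humbert_genfun (m : ℕ) (hm : 2 ≤ m) (x y t : ℝ)
    (h : |x * t| + |y| * |t| ^ m < 1) :
    HasSum (fun n : ℕ => t ^ n * humbert m n x y) (1 / (1 + x * t + y * t ^ m)) := by
  have hm0 : 0 < m := by omega
  set a : ℝ := x * t + y * t ^ m with ha
  set b : ℝ := |x * t| + |y| * |t| ^ m with hb
  have hb0 : 0 ≤ b := by positivity
  have habs : |a| ≤ b := by
    calc |a| ≤ |x * t| + |y * t ^ m| := abs_add_le _ _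
      _ = b := by rw [hb, abs_mul y, abs_pow]
  have habs1 : |a| < 1 := lt_of_le_of_lt habs h
  -- the double-indexed series
  set F : ℕ × ℕ → ℝ := fun p =>
    if p.2 ≤ p.1 then
      (-1 : ℝ) ^ p.1 * (p.1.choose p.2 : ℝ) * (x * t) ^ (p.1 - p.2) * (y * t ^ m) ^ p.2
    else 0 with hF
  -- fiberwise sums of F
  have hfiberF : ∀ k : ℕ, HasSum (fun r => F (k, r)) ((-a) ^ k) := by
    intro k
    have hsupp : ∀ r ∉ Finset.range (k + 1), F (k, r) = 0 := by
      intro r hr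
      simp only [Finset.mem_range, Nat.lt_succ_iff, not_le] at hr
      simp [hF, Nat.not_le.mpr hr, le_of_lt, not_le.mpr hr]
    have := hasSum_sum_of_ne_finset_zero (L := SummationFilter.unconditional ℕ) hsupp
    convert this using 1
    have : (∑ r ∈ Finset.range (k + 1), F (k, r)) =
        (-1 : ℝ) ^ k * ∑ r ∈ Finset.range (k + 1),
          (y * t ^ m) ^ r * (x * t) ^ (k - r) * (k.choose r : ℝ) := by
      rw [Finset.mul_sum]
      refine Finset.sum_congr rfl fun r hr => ?_
      simp only [Finset.mem_range, Nat.lt_succ_iff] at hr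
      simp only [hF, if_pos hr]
      ring
    rw [this, ← add_pow]
    rw [neg_pow]
    ring_nf
    rw [ha]; ring
  -- summability of F
  have hfiberFabs : ∀ k : ℕ, HasSum (fun r => |F (k, r)|) (b ^ k) := by
    intro k
    have hsupp : ∀ r ∉ Finset.range (k + 1), |F (k, r)| = 0 := by
      intro r hr
      simp only [Finset.mem_range, Nat.lt_succ_iff, not_le] at hr
      simp [hF, not_le.mpr hr]
    have := hasSum_sum_of_ne_finset_zero (L := SummationFilter.unconditional ℕ) hsupp
    convert this using 1
    have : (∑ r ∈ Finset.range (k + 1), |F (k, r)|) =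
        ∑ r ∈ Finset.range (k + 1),
          (|y| * |t| ^ m) ^ r * |x * t| ^ (k - r) * (k.choose r : ℝ) := by
      refine Finset.sum_congr rfl fun r hr => ?_
      simp only [Finset.mem_range, Nat.lt_succ_iff] at hr
      simp only [hF, if_pos hr]
      simp only [abs_mul, abs_pow, abs_neg, abs_one, one_pow, Nat.abs_cast]
      ring
    rw [this, ← add_pow]
    rw [hb]
    ring_nf
  have hFsummable : Summable F := by
    apply Summable.of_abs
    rw [summable_prod_of_nonneg (fun p => abs_nonneg _)]
    constructor
    · intro k; exact (hfiberFabs k).summable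
    · have : (fun k : ℕ => ∑' r, |F (k, r)|) = fun k : ℕ => b ^ k := by
        funext k; exact (hfiberFabs k).tsum_eq
      rw [this]
      exact summable_geometric_of_lt_one hb0 h
  have hFsum : HasSum F (1 / (1 + a)) := by
    have h1 : HasSum (fun k : ℕ => (-a) ^ k) (∑' p, F p) :=
      hFsummable.hasSum.prod_fiberwise hfiberF
    have h2 : HasSum (fun k : ℕ => (-a) ^ k) (1 / (1 + a)) := by
      have := hasSum_geometric_of_abs_lt_one (r := -a) (by rwa [abs_neg])
      rwa [sub_neg_eq_add, ← one_div] at this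
    have := h1.unique h2
    rw [← this]
    exact hFsummable.hasSum
  -- reindexing
  set e : ℕ × ℕ → ℕ × ℕ := fun p => (p.1 + (m - 1) * p.2, p.2) with he
  have hinj : Function.Injective e := by
    intro p q hpq
    simp only [he, Prod.mk.injEq] at hpq
    obtain ⟨h1, h2⟩ := hpq
    have h3 : p.1 = q.1 := by rw [h2] at h1; omega
    exact Prod.ext h3 h2
  set G : ℕ × ℕ → ℝ := fun p =>
    if m * p.2 ≤ p.1 then
      (-1 : ℝ) ^ (p.1 - (m - 1) * p.2) * ((p.1 - (m - 1) * p.2).choose p.2 : ℝ) *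
        x ^ (p.1 - m * p.2) * y ^ p.2 * t ^ p.1
    else 0 with hG
  have hcomp : G ∘ e = F := by
    funext p
    obtain ⟨k, r⟩ := p
    have hmr : (m - 1) * r + r = m * r := by
      have : m - 1 + 1 = m := by omega
      calc (m - 1) * r + r = ((m - 1) + 1) * r := by ring
        _ = m * r := by rw [this]
    simp only [Function.comp_apply, he, hG, hF]
    by_cases hrk : r ≤ k
    · have hc : m * r ≤ k + (m - 1) * r := by omega
      rw [if_pos hc, if_pos hrk]
      have e1 : k + (m - 1) * r - (m - 1) * r = k := by omega
      have e2 : k + (m - 1) * r - m * r = k - r := by omega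
      rw [e1, e2]
      have e3 : k - r + m * r = k + (m - 1) * r := by omega
      rw [mul_pow, mul_pow, ← pow_mul, ← e3, pow_add]
      ring
    · have hc : ¬ m * r ≤ k + (m - 1) * r := by omega
      rw [if_neg hc, if_neg hrk]
  have hGzero : ∀ p ∉ Set.range e, G p = 0 := by
    intro p hp
    obtain ⟨n, r⟩ := p
    by_contra hne
    apply hp
    have hcond : m * r ≤ n := by
      by_contra hc
      exact hne (if_neg hc)
    refine ⟨(n - (m - 1) * r, r), ?_⟩
    simp only [he, Prod.mk.injEq]
    have hmr : (m - 1) * r + r = m * r := by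
      have : m - 1 + 1 = m := by omega
      calc (m - 1) * r + r = ((m - 1) + 1) * r := by ring
        _ = m * r := by rw [this]
    exact ⟨by omega, trivial⟩
  have hGsum : HasSum G (1 / (1 + a)) := by
    rw [← hinj.hasSum_iff hGzero, hcomp]
    exact hFsum
  -- fiberwise sums of G give the Humbert polynomials
  have hfiberG : ∀ n : ℕ, HasSum (fun r => G (n, r)) (t ^ n * humbert m n x y) := by
    intro n
    have hsupp : ∀ r ∉ Finset.range (n / m + 1), G (n, r) = 0 := by
      intro r hr
      simp only [Finset.mem_range, Nat.lt_succ_iff, not_le] at hr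
      have : ¬ m * r ≤ n := by
        intro hc
        exact absurd (Nat.le_div_iff_mul_le hm0 |>.mpr (by rwa [mul_comm])) (not_le.mpr hr)
      simp [hG, this]
    have := hasSum_sum_of_ne_finset_zero (L := SummationFilter.unconditional ℕ) hsupp
    convert this using 1
    rw [humbert, ← mul_assoc, mul_comm (t ^ n), mul_assoc, Finset.mul_sum, Finset.mul_sum]
    refine (Finset.sum_congr rfl fun r hr => ?_).symm
    simp only [Finset.mem_range, Nat.lt_succ_iff] at hr
    have hcond : m * r ≤ n := by
      rw [mul_comm]; exact (Nat.le_div_iff_mul_le hm0).mp hr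
    have hmr : (m - 1) * r + r = m * r := by
      have : m - 1 + 1 = m := by omega
      calc (m - 1) * r + r = ((m - 1) + 1) * r := by ring
        _ = m * r := by rw [this]
    simp only [hG, if_pos hcond]
    have hrle : r ≤ n - (m - 1) * r := by omega
    have hsub : n - (m - 1) * r - r = n - m * r := by omega
    rw [Nat.cast_choose ℝ hrle, hsub]
    -- sign computation
    have hsign : (-1 : ℝ) ^ (n - (m - 1) * r) = (-1 : ℝ) ^ n * (-1 : ℝ) ^ ((m - 1) * r) := by
      have hle : (m - 1) * r ≤ n := by omega
      have : (-1 : ℝ) ^ n = (-1 : ℝ) ^ (n - (m - 1) * r) * (-1 : ℝ) ^ ((m - 1) * r) := by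
        rw [← pow_add, Nat.sub_add_cancel hle]
      rw [this, mul_assoc, ← mul_pow]
      norm_num
    rw [hsign]
    have hfac1 : ((n - m * r).factorial : ℝ) ≠ 0 := Nat.cast_ne_zero.mpr (Nat.factorial_ne_zero _)
    have hfac2 : ((r.factorial : ℕ) : ℝ) ≠ 0 := Nat.cast_ne_zero.mpr (Nat.factorial_ne_zero _)
    field_simp
  exact (by
    have := hGsum.prod_fiberwise hfiberG
    have harr : 1 + a = 1 + x * t + y * t ^ m := by rw [ha]; ring
    rwa [harr] at this)
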